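/- arXiv:1901.03633 — 4 statements merged into one kernel-verified Lean document; each statement's English description precedes it below -/
import Mathlib

section
/- Let C be a d-circuit and τ a tuple in the relation of C. Then the proof-tree of τ is connected (every included gate is reachable from the output along included gates) and every gate of the proof-tree has out-degree at most 1 within the proof-tree. -/
open Finset

/-- Labels of gates in a `{∪,×}`-circuit: inputs `x/d`, union gates, product gates. -/
inductive GLabel (X D : Type) where
  | inp (x : X) (d : D)
  | union
  | prod

/-- Restriction of a (partial) tuple to a set of attributes. -/
def restrictTup {X D : Type} [DecidableEq X] (τ : X → Option D) (A : Finset X) :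
    X → Option D :=
  fun x => if x ∈ A then τ x else none

/-- A `{∪,×}`-circuit on attributes `X` and domain `D`: a finite DAG whose leaves are
labeled by singleton relations `x/d`, internal gates by `∪` or `×` (with the syntactic
restrictions on attribute sets), together with its semantics `rel`. -/
structure Circuit (X D : Type) [Fintype X] [Fintype D] [DecidableEq X] [DecidableEq D] where
  Gate : Type
  fg : Fintype Gate
  dg : DecidableEq Gate
  children : Gate → Finset Gate
  label : Gate → GLabel X D
  output : Gate
  attrs : Gate → Finset X
  rel : Gate → Finset (X → Option D)
  depth : Gate → ℕ
  depth_lt : ∀ u, ∀ c ∈ children u, depth c < depth u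
  inp_no_children : ∀ u x d, label u = .inp x d → children u = ∅
  internal_children_nonempty :
    ∀ u, (label u = .union ∨ label u = .prod) → (children u).Nonempty
  attrs_inp : ∀ u x d, label u = .inp x d → attrs u = {x}
  attrs_internal :
    ∀ u, (label u = .union ∨ label u = .prod) → attrs u = (children u).biUnion attrs
  union_attrs : ∀ u, label u = .union → ∀ c ∈ children u, attrs c = attrs u
  prod_attrs : ∀ u, label u = .prod →
    ∀ c₁ ∈ children u, ∀ c₂ ∈ children u, c₁ ≠ c₂ → Disjoint (attrs c₁) (attrs c₂)
  rel_support : ∀ u, ∀ τ ∈ rel u, ∀ x, (τ x).isSome ↔ x ∈ attrs u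
  rel_inp : ∀ u x d, label u = .inp x d →
    ∀ τ, τ ∈ rel u ↔ τ = (fun y => if y = x then some d else none)
  rel_union : ∀ u, label u = .union → ∀ τ, τ ∈ rel u ↔ ∃ c ∈ children u, τ ∈ rel c
  rel_prod : ∀ u, label u = .prod →
    ∀ τ, τ ∈ rel u ↔ ((∀ x, (τ x).isSome ↔ x ∈ attrs u) ∧
      ∀ c ∈ children u, restrictTup τ (attrs c) ∈ rel c)

attribute [instance] Circuit.fg Circuit.dg

namespace Circuit

variable {X D : Type} [Fintype X] [Fintype D] [DecidableEq X] [DecidableEq D]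

/-- A d-circuit: every `∪`-gate is disjoint (its children define pairwise
disjoint relations). -/
def DisjointUnions (C : Circuit X D) : Prop :=
  ∀ u, C.label u = .union → ∀ c₁ ∈ C.children u, ∀ c₂ ∈ C.children u,
    c₁ ≠ c₂ → Disjoint (C.rel c₁) (C.rel c₂)

/-- The gates of the proof-tree of a tuple `τ`: the output gate is in, and a child `u`
of an included gate `v` is included iff the restriction of `τ` to the attributes of
the subcircuit rooted at `u` belongs to the relation of `u`. -/
inductive InPT (C : Circuit X D) (τ : X → Option D) : C.Gate → Prop
  | out : InPT C τ C.output
  | step {u v : C.Gate} : InPT C τ v → u ∈ C.children v →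
      restrictTup τ (C.attrs u) ∈ C.rel u → InPT C τ u

/-- An edge `e = (u, v)` (from child `u` to parent `v`) belongs to the proof-tree
of `τ`. -/
def EdgeInPT (C : Circuit X D) (τ : X → Option D) (e : C.Gate × C.Gate) : Prop :=
  C.InPT τ e.2 ∧ e.1 ∈ C.children e.2 ∧ restrictTup τ (C.attrs e.1) ∈ C.rel e.1

/-- The edges of the circuit, directed from child to parent. -/
def edges (C : Circuit X D) : Finset (C.Gate × C.Gate) :=
  Finset.univ.filter (fun e => e.1 ∈ C.children e.2)

/-- Outgoing edges of a gate `u` (towards its parents). -/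
def outEdges (C : Circuit X D) (u : C.Gate) : Finset (C.Gate × C.Gate) :=
  C.edges.filter (fun e => e.1 = u)

/-- Ingoing edges of a gate `u` (from its children). -/
def inEdges (C : Circuit X D) (u : C.Gate) : Finset (C.Gate × C.Gate) :=
  C.edges.filter (fun e => e.2 = u)

open Classical in
/-- `R(e)`: the set of tuples of `R(C)` whose proof-tree contains the edge `e`. -/
noncomputable def relEdge (C : Circuit X D) (e : C.Gate × C.Gate) :
    Finset (X → Option D) :=
  (C.rel C.output).filter (fun τ => C.EdgeInPT τ e)

/-- Soundness of an edge-weighting: flow conservation at non-output `∪`-gates, and at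
`×`-gates all ingoing edges carry the same weight, which (for non-output gates)
equals the sum of the outgoing weights. -/
def Sound (C : Circuit X D) (W : C.Gate × C.Gate → ℝ) : Prop :=
  (∀ u, C.label u = .union → u ≠ C.output →
      ∑ i ∈ C.inEdges u, W i = ∑ o ∈ C.outEdges u, W o) ∧
  (∀ u, C.label u = .prod →
      (∀ i ∈ C.inEdges u, ∀ i' ∈ C.inEdges u, W i = W i') ∧
      (u ≠ C.output → ∀ i ∈ C.inEdges u, W i = ∑ o ∈ C.outEdges u, W o))

end Circuit

/-- Reachability from the output along gates included in the proof-tree of `τ`. -/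
inductive Circuit.ReachPT {X D : Type} [Fintype X] [Fintype D]
    [DecidableEq X] [DecidableEq D]
    (C : Circuit X D) (τ : X → Option D) : C.Gate → Prop
  | out : C.InPT τ C.output → Circuit.ReachPT C τ C.output
  | step {u v : C.Gate} : Circuit.ReachPT C τ v → u ∈ C.children v →
      C.InPT τ u → Circuit.ReachPT C τ u

namespace CircuitAux

open Circuit

variable {X D : Type} [Fintype X] [Fintype D] [DecidableEq X] [DecidableEq D]

/-- `u` is a PT-ancestor-style descendant relation: `Anc C τ a b` means there is a
path from `a` down to `b` along edges whose lower endpoint satisfies the PT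
membership condition. -/
inductive Anc (C : Circuit X D) (τ : X → Option D) : C.Gate → C.Gate → Prop
  | refl (a : C.Gate) : Anc C τ a a
  | step {a v u : C.Gate} : Anc C τ a v → u ∈ C.children v →
      restrictTup τ (C.attrs u) ∈ C.rel u → Anc C τ a u

lemma label_of_child {C : Circuit X D} {u v : C.Gate} (h : u ∈ C.children v) :
    C.label v = .union ∨ C.label v = .prod := by
  rcases hl : C.label v with ⟨x, d⟩ | _ | _
  · rw [C.inp_no_children v x d hl] at h; simp at h
  · exact Or.inl rfl
  · exact Or.inr rfl

lemma attrs_child_subset {C : Circuit X D} {u v : C.Gate} (h : u ∈ C.children v) :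
    C.attrs u ⊆ C.attrs v := by
  rw [C.attrs_internal v (label_of_child h)]
  exact Finset.subset_biUnion_of_mem _ h

lemma attrs_nonempty (C : Circuit X D) (u : C.Gate) : (C.attrs u).Nonempty := by
  suffices h : ∀ n u, C.depth u < n → (C.attrs u).Nonempty from
    h (C.depth u + 1) u (by omega)
  intro n
  induction n with
  | zero => intro u h; omega
  | succ n ih =>
    intro u hu
    rcases hl : C.label u with ⟨x, d⟩ | _ | _
    · rw [C.attrs_inp u x d hl]; exact ⟨x, by simp⟩
    · obtain ⟨c, hc⟩ := C.internal_children_nonempty u (Or.inl hl)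
      rw [C.attrs_internal u (Or.inl hl)]
      obtain ⟨y, hy⟩ := ih c (by have := C.depth_lt u c hc; omega)
      exact ⟨y, Finset.mem_biUnion.mpr ⟨c, hc, hy⟩⟩
    · obtain ⟨c, hc⟩ := C.internal_children_nonempty u (Or.inr hl)
      rw [C.attrs_internal u (Or.inr hl)]
      obtain ⟨y, hy⟩ := ih c (by have := C.depth_lt u c hc; omega)
      exact ⟨y, Finset.mem_biUnion.mpr ⟨c, hc, hy⟩⟩

lemma anc_depth {C : Circuit X D} {τ : X → Option D} {a b : C.Gate}
    (h : Anc C τ a b) : C.depth b ≤ C.depth a := by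
  induction h with
  | refl => exact le_rfl
  | step h hc _ ih => exact le_trans (le_of_lt (C.depth_lt _ _ hc)) ih

lemma anc_attrs {C : Circuit X D} {τ : X → Option D} {a b : C.Gate}
    (h : Anc C τ a b) : C.attrs b ⊆ C.attrs a := by
  induction h with
  | refl => exact Finset.Subset.refl _
  | step h hc _ ih => exact Finset.Subset.trans (attrs_child_subset hc) ih

lemma anc_head {C : Circuit X D} {τ : X → Option D} {a b : C.Gate}
    (h : Anc C τ a b) :
    a = b ∨ ∃ c, c ∈ C.children a ∧ restrictTup τ (C.attrs c) ∈ C.rel c ∧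
      Anc C τ c b := by
  induction h with
  | refl => exact Or.inl rfl
  | @step v u h hc hr ih =>
    rcases ih with rfl | ⟨c, hc', hr', hanc⟩
    · exact Or.inr ⟨u, hc, hr, Anc.refl u⟩
    · exact Or.inr ⟨c, hc', hr', Anc.step hanc hc hr⟩

/-- Two distinct children of a union gate cannot both carry `τ` (d-circuit). -/
lemma union_children_unique {C : Circuit X D} (hd : C.DisjointUnions)
    {τ : X → Option D} {v c₁ c₂ : C.Gate} (hl : C.label v = .union)
    (h₁ : c₁ ∈ C.children v) (h₂ : c₂ ∈ C.children v)
    (hr₁ : restrictTup τ (C.attrs c₁) ∈ C.rel c₁)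
    (hr₂ : restrictTup τ (C.attrs c₂) ∈ C.rel c₂) : c₁ = c₂ := by
  by_contra hne
  have hdis := hd v hl c₁ h₁ c₂ h₂ hne
  have he : C.attrs c₁ = C.attrs c₂ := by
    rw [C.union_attrs v hl c₁ h₁, C.union_attrs v hl c₂ h₂]
  rw [he] at hr₁
  exact (Finset.disjoint_left.mp hdis hr₁) hr₂

lemma inPT_anc {C : Circuit X D} {τ : X → Option D} {u : C.Gate}
    (h : C.InPT τ u) : Anc C τ C.output u := by
  induction h with
  | out => exact Anc.refl _
  | step h hc hr ih => exact Anc.step ih hc hr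

lemma trichotomy {C : Circuit X D} (hd : C.DisjointUnions) {τ : X → Option D}
    {v b : C.Gate} (hv : C.InPT τ v) (hb : C.InPT τ b) :
    Anc C τ v b ∨ Anc C τ b v ∨ Disjoint (C.attrs v) (C.attrs b) := by
  induction hb with
  | out => exact Or.inr (Or.inl (inPT_anc hv))
  | @step b p hp hc hr ih =>
    rcases ih with h | h | h
    · -- Anc v p : extend
      exact Or.inl (Anc.step h hc hr)
    · -- Anc p v : decompose first step
      rcases anc_head h with rfl | ⟨c, hc', hr', hanc⟩
      · exact Or.inl (Anc.step (Anc.refl _) hc hr)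
      · by_cases hcb : c = b
        · subst hcb; exact Or.inr (Or.inl hanc)
        · rcases label_of_child hc with hl | hl
          · exact absurd (union_children_unique hd hl hc' hc hr' hr) hcb
          · have hdis := C.prod_attrs p hl c hc' b hc hcb
            exact Or.inr (Or.inr (Finset.disjoint_of_subset_left (anc_attrs hanc) hdis))
    · -- Disjoint attrs v attrs p
      exact Or.inr (Or.inr (Finset.disjoint_of_subset_right (attrs_child_subset hc) h))

end CircuitAux

/-- The proof-tree of a tuple is connected (every included gate is reachable from the
output along included gates) and every gate has out-degree at most 1 within the
proof-tree. -/
theorem prooftree_connected_outdegree_le_one {X D : Type} [Fintype X] [Fintype D]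
    [DecidableEq X] [DecidableEq D]
    (C : Circuit X D) (hd : C.DisjointUnions)
    (τ : X → Option D) (hτ : τ ∈ C.rel C.output) :
    (∀ u : C.Gate, C.InPT τ u → C.ReachPT τ u) ∧
    (∀ u v₁ v₂ : C.Gate, C.EdgeInPT τ (u, v₁) → C.EdgeInPT τ (u, v₂) → v₁ = v₂) := by
  open CircuitAux in
  constructor
  · intro u hu
    induction hu with
    | out => exact Circuit.ReachPT.out Circuit.InPT.out
    | step h hc hr ih => exact Circuit.ReachPT.step ih hc (Circuit.InPT.step h hc hr)
  · rintro u v₁ v₂ ⟨h₁, hc₁, hr₁⟩ ⟨h₂, hc₂, hr₂⟩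
    simp only at h₁ hc₁ hr₁ h₂ hc₂ hr₂
    by_contra hne
    have key : ∀ a b : C.Gate, C.InPT τ a → C.InPT τ b → a ≠ b →
        Anc C τ a b → u ∈ C.children a → u ∈ C.children b →
        restrictTup τ (C.attrs u) ∈ C.rel u → False := by
      intro a b ha hb hab hanc hua hub hru
      rcases anc_head hanc with rfl | ⟨c, hc', hr', hanc'⟩
      · exact hab rfl
      · by_cases hcu : c = u
        · subst hcu
          have h1 : C.depth b ≤ C.depth c := anc_depth hanc'
          have h2 : C.depth c < C.depth b := C.depth_lt b c hub
          omega
        · rcases label_of_child hua with hl | hl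
          · exact hcu (union_children_unique hd hl hc' hua hr' hru)
          · have hdis := C.prod_attrs a hl c hc' u hua hcu
            have hsub : C.attrs u ⊆ C.attrs c :=
              Finset.Subset.trans (attrs_child_subset hub) (anc_attrs hanc')
            obtain ⟨x, hx⟩ := attrs_nonempty C u
            exact Finset.disjoint_left.mp hdis (hsub hx) hx
    rcases trichotomy hd h₁ h₂ with h | h | h
    · exact key v₁ v₂ h₁ h₂ hne h hc₁ hc₂ hr₁
    · exact key v₂ v₁ h₂ h₁ (Ne.symm hne) h hc₂ hc₁ hr₁
    · obtain ⟨x, hx⟩ := CircuitAux.attrs_nonempty C u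
      exact Finset.disjoint_left.mp h (attrs_child_subset hc₁ hx)
        (attrs_child_subset hc₂ hx)
end

section
/- Let C be a d-circuit on attributes X, and assume for each attribute x and domain element d there is at most one input labeled x/d. Then for every tuple τ in the relation of C and every attribute x ∈ X, the proof-tree of τ contains exactly one input, and that input is labeled x/τ(x). -/
open Finset

/-- In a d-circuit with at most one input per label `x/d` and whose output gate has all
attributes, for every tuple `τ` in the relation and every attribute `x`, the
proof-tree of `τ` contains exactly one input on attribute `x`, and its label is
`x/τ(x)`. -/
theorem prooftree_unique_input {X D : Type} [Fintype X] [Fintype D]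
    [DecidableEq X] [DecidableEq D]
    (C : Circuit X D) (hd : C.DisjointUnions)
    (huniq : ∀ (u₁ u₂ : C.Gate) (x : X) (d : D),
      C.label u₁ = GLabel.inp x d → C.label u₂ = GLabel.inp x d → u₁ = u₂)
    (hattrs : C.attrs C.output = Finset.univ)
    (τ : X → Option D) (hτ : τ ∈ C.rel C.output) (x : X) (d : D) (hx : τ x = some d) :
    (∃! u : C.Gate, C.InPT τ u ∧ ∃ d', C.label u = GLabel.inp x d') ∧
    (∀ (u : C.Gate) (d' : D), C.InPT τ u → C.label u = GLabel.inp x d' → d' = d) := by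
  classical
  -- every gate in the proof tree satisfies: restriction of τ to its attrs is in its rel
  have memRel : ∀ u : C.Gate, C.InPT τ u → restrictTup τ (C.attrs u) ∈ C.rel u := by
    intro u hu
    cases hu with
    | out =>
        have hres : restrictTup τ (C.attrs C.output) = τ := by
          funext y; simp [restrictTup, hattrs]
        rw [hres]; exact hτ
    | step _ _ h => exact h
  -- value lemma: any input gate in the proof tree on attribute x has label x/d
  have hval : ∀ (u : C.Gate) (d' : D), C.InPT τ u → C.label u = GLabel.inp x d' → d' = d := by
    intro u d' hu hl
    have hrel := memRel u hu
    rw [C.attrs_inp u x d' hl] at hrel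
    have heq := (C.rel_inp u x d' hl _).1 hrel
    have hxx := congrFun heq x
    simp [restrictTup] at hxx
    rw [hx] at hxx
    exact (Option.some_inj.mp hxx).symm
  -- restriction composition
  have hrr : ∀ (A B : Finset X), B ⊆ A →
      restrictTup (restrictTup τ A) B = restrictTup τ B := by
    intro A B hBA; funext y
    by_cases hy : y ∈ B
    · simp [restrictTup, hy, hBA hy]
    · simp [restrictTup, hy]
  -- existence by strong induction on depth
  have key : ∀ n, ∀ u : C.Gate, C.depth u < n → C.InPT τ u → x ∈ C.attrs u →
      ∃ w : C.Gate, C.InPT τ w ∧ ∃ d', C.label w = GLabel.inp x d' := by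
    intro n
    induction n with
    | zero => intro u hdep; omega
    | succ n ih =>
        intro u hdep hu hxu
        have hrel := memRel u hu
        cases hl : C.label u with
        | inp y e =>
            have ha := C.attrs_inp u y e hl
            rw [ha, Finset.mem_singleton] at hxu
            subst hxu
            exact ⟨u, hu, e, hl⟩
        | union =>
            obtain ⟨c, hc, hcrel⟩ := (C.rel_union u hl _).1 hrel
            have hca := C.union_attrs u hl c hc
            have hcrel' : restrictTup τ (C.attrs c) ∈ C.rel c := by rw [hca]; exact hcrel
            have hcin : C.InPT τ c := .step hu hc hcrel'
            have hdc : C.depth c < n := by have := C.depth_lt u c hc; omega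
            exact ih c hdc hcin (by rw [hca]; exact hxu)
        | prod =>
            have ha := C.attrs_internal u (Or.inr hl)
            have hxu' : x ∈ (C.children u).biUnion C.attrs := by rw [← ha]; exact hxu
            obtain ⟨c, hc, hxc⟩ := Finset.mem_biUnion.1 hxu'
            have hch := ((C.rel_prod u hl _).1 hrel).2 c hc
            have hsub : C.attrs c ⊆ C.attrs u := by
              rw [ha]; intro y hy; exact Finset.mem_biUnion.2 ⟨c, hc, hy⟩
            rw [hrr _ _ hsub] at hch
            have hcin : C.InPT τ c := .step hu hc hch
            have hdc : C.depth c < n := by have := C.depth_lt u c hc; omega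
            exact ih c hdc hcin hxc
  obtain ⟨w, hw, d', hlw⟩ := key (C.depth C.output + 1) C.output (by omega) .out
    (by rw [hattrs]; exact Finset.mem_univ x)
  refine ⟨⟨w, ⟨hw, d', hlw⟩, ?_⟩, hval⟩
  rintro u ⟨hu, d'', hlu⟩
  have h1 : d'' = d := hval u d'' hu hlu
  have h2 : d' = d := hval w d' hw hlw
  exact huniq u w x d (h1 ▸ hlu) (h2 ▸ hlw)
end

section
/- Let C be a d-circuit and u an internal ∪-gate of C that is not the output. Then the disjoint union over ingoing edges i of u of R(i) equals the disjoint union over outgoing edges o of u of R(o), where R(e) is the set of tuples of R(C) whose proof-tree contains edge e. Moreover both unions are disjoint. -/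
open Finset

namespace Circuit

variable {X D : Type} [Fintype X] [Fintype D] [DecidableEq X] [DecidableEq D]

/-- Every gate has a nonempty attribute set. -/
lemma attrs_nonempty (C : Circuit X D) (u : C.Gate) : (C.attrs u).Nonempty := by
  cases hl : C.label u with
  | inp x d => rw [C.attrs_inp u x d hl]; exact ⟨x, Finset.mem_singleton_self x⟩
  | union =>
    obtain ⟨c, hc⟩ := C.internal_children_nonempty u (Or.inl hl)
    rw [C.attrs_internal u (Or.inl hl)]
    obtain ⟨x, hx⟩ := attrs_nonempty C c
    exact ⟨x, Finset.mem_biUnion.2 ⟨c, hc, hx⟩⟩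
  | prod =>
    obtain ⟨c, hc⟩ := C.internal_children_nonempty u (Or.inr hl)
    rw [C.attrs_internal u (Or.inr hl)]
    obtain ⟨x, hx⟩ := attrs_nonempty C c
    exact ⟨x, Finset.mem_biUnion.2 ⟨c, hc, hx⟩⟩
termination_by C.depth u
decreasing_by all_goals exact C.depth_lt u c hc

lemma attrs_child_subset (C : Circuit X D) {c u : C.Gate} (hc : c ∈ C.children u) :
    C.attrs c ⊆ C.attrs u := by
  have hl : C.label u = .union ∨ C.label u = .prod := by
    cases hl : C.label u with
    | inp x d =>
      exfalso
      have := C.inp_no_children u _ _ hl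
      rw [this] at hc
      exact absurd hc (Finset.notMem_empty c)
    | union => exact Or.inl rfl
    | prod => exact Or.inr rfl
  rw [C.attrs_internal u hl]
  exact fun x hx => Finset.mem_biUnion.2 ⟨c, hc, hx⟩

/-- `Below C τ b a`: gate `a` is reachable from `b` going down along "active" gates. -/
inductive Below (C : Circuit X D) (τ : X → Option D) (b : C.Gate) : C.Gate → Prop
  | refl : Below C τ b b
  | step {a c : C.Gate} : Below C τ b c → a ∈ C.children c →
      restrictTup τ (C.attrs a) ∈ C.rel a → Below C τ b a

lemma Below.attrs_subset {C : Circuit X D} {τ : X → Option D} {b a : C.Gate}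
    (h : Below C τ b a) : C.attrs a ⊆ C.attrs b := by
  induction h with
  | refl => exact subset_rfl
  | step _ hc _ ih => exact (C.attrs_child_subset hc).trans ih

lemma Below.depth_le {C : Circuit X D} {τ : X → Option D} {b a : C.Gate}
    (h : Below C τ b a) : C.depth a ≤ C.depth b := by
  induction h with
  | refl => exact le_rfl
  | step _ hc _ ih => exact le_trans (le_of_lt (C.depth_lt _ _ hc)) ih

lemma Below.first {C : Circuit X D} {τ : X → Option D} {b a : C.Gate}
    (h : Below C τ b a) :
    a = b ∨ ∃ c ∈ C.children b, restrictTup τ (C.attrs c) ∈ C.rel c ∧ Below C τ c a := by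
  induction h with
  | refl => exact Or.inl rfl
  | step _ hc ha ih =>
    rename_i a' c' _
    rcases ih with rfl | ⟨c, hc₁, hc₂, hc₃⟩
    · exact Or.inr ⟨a', hc, ha, Below.refl⟩
    · exact Or.inr ⟨c, hc₁, hc₂, Below.step hc₃ hc ha⟩

lemma InPT.below_output {C : Circuit X D} {τ : X → Option D} {v : C.Gate}
    (h : C.InPT τ v) : Below C τ C.output v := by
  induction h with
  | out => exact Below.refl
  | step _ hc ha ih => exact Below.step ih hc ha

lemma restrict_output {C : Circuit X D} {τ : X → Option D}
    (hτ : τ ∈ C.rel C.output) : restrictTup τ (C.attrs C.output) = τ := by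
  funext x
  unfold restrictTup
  by_cases hx : x ∈ C.attrs C.output
  · simp [hx]
  · simp only [hx, if_false]
    have := (C.rel_support _ τ hτ x).not.2 hx
    cases h : τ x with
    | none => rfl
    | some d => exact absurd (by simp [h]) this

lemma InPT.active {C : Circuit X D} {τ : X → Option D} {v : C.Gate}
    (hτ : τ ∈ C.rel C.output) (h : C.InPT τ v) :
    restrictTup τ (C.attrs v) ∈ C.rel v := by
  cases h with
  | out => rw [restrict_output hτ]; exact hτ
  | step _ _ ha => exact ha

lemma InPT.depth_le {C : Circuit X D} {τ : X → Option D} {v : C.Gate}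
    (h : C.InPT τ v) : C.depth v ≤ C.depth C.output :=
  h.below_output.depth_le

/-- Inversion for non-output PT gates. -/
lemma InPT.parent {C : Circuit X D} {τ : X → Option D} {v : C.Gate}
    (h : C.InPT τ v) (hv : v ≠ C.output) :
    ∃ p, C.InPT τ p ∧ v ∈ C.children p ∧ restrictTup τ (C.attrs v) ∈ C.rel v := by
  cases h with
  | out => exact absurd rfl hv
  | step hp hc ha => exact ⟨_, hp, hc, ha⟩

/-- Separation: two gates of the proof tree are comparable or attribute-disjoint. -/
lemma sep (C : Circuit X D) (hd : C.DisjointUnions) {τ : X → Option D}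
    (hτ : τ ∈ C.rel C.output) :
    ∀ n (v₁ v₂ : C.Gate),
      (C.depth C.output - C.depth v₁) + (C.depth C.output - C.depth v₂) ≤ n →
      C.InPT τ v₁ → C.InPT τ v₂ →
      v₁ = v₂ ∨ Below C τ v₁ v₂ ∨ Below C τ v₂ v₁ ∨
        Disjoint (C.attrs v₁) (C.attrs v₂) := by
  intro n
  induction n with
  | zero =>
    intro v₁ v₂ hμ h₁ h₂
    by_cases e₁ : v₁ = C.output
    · subst e₁; exact Or.inr (Or.inl h₂.below_output)
    by_cases e₂ : v₂ = C.output
    · subst e₂; exact Or.inr (Or.inr (Or.inl h₁.below_output))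
    obtain ⟨p₁, hp₁, hc₁, -⟩ := h₁.parent e₁
    have h1 : C.depth v₁ < C.depth p₁ := C.depth_lt _ _ hc₁
    have h2 : C.depth p₁ ≤ C.depth C.output := hp₁.depth_le
    omega
  | succ n ih =>
    intro v₁ v₂ hμ h₁ h₂
    by_cases e₁ : v₁ = C.output
    · subst e₁; exact Or.inr (Or.inl h₂.below_output)
    by_cases e₂ : v₂ = C.output
    · subst e₂; exact Or.inr (Or.inr (Or.inl h₁.below_output))
    obtain ⟨p₁, hp₁, hc₁, hact₁⟩ := h₁.parent e₁
    have hdlt : C.depth v₁ < C.depth p₁ := C.depth_lt _ _ hc₁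
    have hdle : C.depth p₁ ≤ C.depth C.output := hp₁.depth_le
    have hμ' : (C.depth C.output - C.depth p₁) + (C.depth C.output - C.depth v₂) ≤ n := by
      omega
    rcases ih p₁ v₂ hμ' hp₁ h₂ with rfl | hb | hb | hdis
    · -- p₁ = v₂ : v₁ is a child of v₂
      exact Or.inr (Or.inr (Or.inl (Below.step Below.refl hc₁ hact₁)))
    ·
      rcases hb.first with rfl | ⟨c, hcc, hcact, hbc⟩
      · -- v₂ = p₁
        exact Or.inr (Or.inr (Or.inl (Below.step Below.refl hc₁ hact₁)))
      by_cases hcu : c = v₁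
      · subst hcu; exact Or.inr (Or.inl hbc)
      · -- c ≠ v₁, both children of p₁
        have hlp : C.label p₁ = .union ∨ C.label p₁ = .prod := by
          cases hl : C.label p₁ with
          | inp x d =>
            exfalso
            have := C.inp_no_children p₁ _ _ hl
            rw [this] at hc₁
            exact absurd hc₁ (Finset.notMem_empty _)
          | union => exact Or.inl rfl
          | prod => exact Or.inr rfl
        rcases hlp with hl | hl
        · exfalso
          have ha1 : C.attrs v₁ = C.attrs p₁ := C.union_attrs p₁ hl v₁ hc₁
          have ha2 : C.attrs c = C.attrs p₁ := C.union_attrs p₁ hl c hcc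
          have hdisj := hd p₁ hl v₁ hc₁ c hcc (fun h => hcu h.symm)
          rw [ha1] at hact₁
          rw [ha2] at hcact
          exact Finset.disjoint_left.1 hdisj hact₁ hcact
        · have hdisj := C.prod_attrs p₁ hl v₁ hc₁ c hcc (fun h => hcu h.symm)
          exact Or.inr (Or.inr (Or.inr
            (hdisj.mono_right hbc.attrs_subset)))
    · -- p₁ below v₂ : then v₁ below v₂
      exact Or.inr (Or.inr (Or.inl (Below.step hb hc₁ hact₁)))
    · exact Or.inr (Or.inr (Or.inr
        (hdis.mono_left (C.attrs_child_subset hc₁))))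


/-- A gate cannot have two distinct parents in the proof tree when one parent is
below the other. -/
lemma no_double_parent (C : Circuit X D) (hd : C.DisjointUnions) {τ : X → Option D}
    {u v₁ v₂ : C.Gate} (hne : v₁ ≠ v₂)
    (hu1 : u ∈ C.children v₁) (hu2 : u ∈ C.children v₂)
    (hact : restrictTup τ (C.attrs u) ∈ C.rel u)
    (hb : Below C τ v₁ v₂) : False := by
  rcases hb.first with h | ⟨c, hcc, hcact, hbc⟩
  · exact hne h.symm
  by_cases hcu : c = u
  · subst hcu
    have h1 : C.depth v₂ ≤ C.depth c := hbc.depth_le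
    have h2 : C.depth c < C.depth v₂ := C.depth_lt _ _ hu2
    omega
  have hlp : C.label v₁ = .union ∨ C.label v₁ = .prod := by
    cases hl : C.label v₁ with
    | inp x d =>
      exfalso
      have := C.inp_no_children v₁ _ _ hl
      rw [this] at hu1
      exact absurd hu1 (Finset.notMem_empty _)
    | union => exact Or.inl rfl
    | prod => exact Or.inr rfl
  rcases hlp with hl | hl
  · have ha1 : C.attrs u = C.attrs v₁ := C.union_attrs v₁ hl u hu1
    have ha2 : C.attrs c = C.attrs v₁ := C.union_attrs v₁ hl c hcc
    have hdisj := hd v₁ hl u hu1 c hcc (fun h => hcu h.symm)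
    rw [ha1] at hact
    rw [ha2] at hcact
    exact Finset.disjoint_left.1 hdisj hact hcact
  · have hdisj := C.prod_attrs v₁ hl u hu1 c hcc (fun h => hcu h.symm)
    obtain ⟨x, hx⟩ := C.attrs_nonempty u
    exact Finset.disjoint_left.1 hdisj hx
      (hbc.attrs_subset (C.attrs_child_subset hu2 hx))

end Circuit

/-- For an internal (non-output) `∪`-gate `u` of a d-circuit, the disjoint union over
ingoing edges `i` of `R(i)` equals the disjoint union over outgoing edges `o` of
`R(o)`, and both unions are disjoint. -/
theorem unionGate_inEdges_eq_outEdges {X D : Type} [Fintype X] [Fintype D]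
    [DecidableEq X] [DecidableEq D]
    (C : Circuit X D) (hd : C.DisjointUnions)
    (u : C.Gate) (hlab : C.label u = GLabel.union) (hout : u ≠ C.output) :
    (C.inEdges u).biUnion C.relEdge = (C.outEdges u).biUnion C.relEdge ∧
    (∀ e₁ ∈ C.inEdges u, ∀ e₂ ∈ C.inEdges u, e₁ ≠ e₂ →
      Disjoint (C.relEdge e₁) (C.relEdge e₂)) ∧
    (∀ e₁ ∈ C.outEdges u, ∀ e₂ ∈ C.outEdges u, e₁ ≠ e₂ →
      Disjoint (C.relEdge e₁) (C.relEdge e₂)) := by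
  classical
  have hmem : ∀ (e : C.Gate × C.Gate) (τ : X → Option D),
      τ ∈ C.relEdge e ↔ τ ∈ C.rel C.output ∧ C.InPT τ e.2 ∧ e.1 ∈ C.children e.2 ∧
        restrictTup τ (C.attrs e.1) ∈ C.rel e.1 := by
    intro e τ
    rw [Circuit.relEdge, Finset.mem_filter]
    simp [Circuit.relEdge, Circuit.EdgeInPT, and_assoc]
  have hinE : ∀ (e : C.Gate × C.Gate),
      e ∈ C.inEdges u ↔ e.1 ∈ C.children e.2 ∧ e.2 = u := by
    intro e
    simp [Circuit.inEdges, Circuit.edges, and_assoc]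
  have houtE : ∀ (e : C.Gate × C.Gate),
      e ∈ C.outEdges u ↔ e.1 ∈ C.children e.2 ∧ e.1 = u := by
    intro e
    simp [Circuit.outEdges, Circuit.edges, and_assoc]
  refine ⟨?_, ?_, ?_⟩
  · -- equality of the two unions
    ext τ
    simp only [Finset.mem_biUnion]
    constructor
    · rintro ⟨⟨c, u'⟩, he, hτ⟩
      obtain ⟨hcc, rfl⟩ := (hinE _).1 he
      obtain ⟨hτo, hPT, hc, hact⟩ := (hmem _ _).1 hτ
      -- u is active
      have hau : restrictTup τ (C.attrs u') ∈ C.rel u' := by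
        rw [C.rel_union u' hlab]
        exact ⟨c, hc, by rwa [C.union_attrs u' hlab c hc] at hact⟩
      obtain ⟨p, hp, hcp, -⟩ := hPT.parent hout
      exact ⟨(u', p), (houtE _).2 ⟨hcp, rfl⟩,
        (hmem _ _).2 ⟨hτo, hp, hcp, hau⟩⟩
    · rintro ⟨⟨u', p⟩, he, hτ⟩
      obtain ⟨hcp, rfl⟩ := (houtE _).1 he
      obtain ⟨hτo, hPT, hc, hact⟩ := (hmem _ _).1 hτ
      have hPTu : C.InPT τ u' := Circuit.InPT.step hPT hc hact
      obtain ⟨c, hcc, hrc⟩ := (C.rel_union u' hlab _).1 hact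
      refine ⟨(c, u'), (hinE _).2 ⟨hcc, rfl⟩,
        (hmem _ _).2 ⟨hτo, hPTu, hcc, ?_⟩⟩
      rwa [C.union_attrs u' hlab c hcc]
  · -- in-edges are disjoint
    rintro ⟨c₁, u₁⟩ he₁ ⟨c₂, u₂⟩ he₂ hne
    obtain ⟨hc₁, rfl⟩ := (hinE _).1 he₁
    obtain ⟨hc₂, h2⟩ := (hinE _).1 he₂
    subst h2
    have hcne : c₁ ≠ c₂ := fun h => hne (by rw [h])
    rw [Finset.disjoint_left]
    intro τ hτ₁ hτ₂
    obtain ⟨-, -, -, hact₁⟩ := (hmem _ _).1 hτ₁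
    obtain ⟨-, -, -, hact₂⟩ := (hmem _ _).1 hτ₂
    rw [C.union_attrs _ hlab c₁ hc₁] at hact₁
    rw [C.union_attrs _ hlab c₂ hc₂] at hact₂
    exact Finset.disjoint_left.1 (hd _ hlab c₁ hc₁ c₂ hc₂ hcne) hact₁ hact₂
  · -- out-edges are disjoint
    rintro ⟨u₁, v₁⟩ he₁ ⟨u₂, v₂⟩ he₂ hne
    obtain ⟨hc₁, h1⟩ := (houtE _).1 he₁
    obtain ⟨hc₂, h2⟩ := (houtE _).1 he₂
    simp only at h1 h2
    rw [h1] at hc₁ he₁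
    rw [h2] at hc₂ he₂
    have hvne : v₁ ≠ v₂ := fun h => hne (by rw [h1, h2, h])
    rw [Finset.disjoint_left]
    intro τ hτ₁ hτ₂
    obtain ⟨hτo, hPT₁, -, hact⟩ := (hmem _ _).1 hτ₁
    obtain ⟨-, hPT₂, -, -⟩ := (hmem _ _).1 hτ₂
    simp only at hact hPT₁ hPT₂
    rw [h1] at hact
    rcases C.sep hd hτo _ v₁ v₂ le_rfl hPT₁ hPT₂ with h | hb | hb | hdis
    · exact hvne h
    · exact C.no_double_parent hd hvne hc₁ hc₂ hact hb
    · exact C.no_double_parent hd hvne.symm hc₂ hc₁ hact hb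
    · obtain ⟨x, hx⟩ := C.attrs_nonempty u
      exact Finset.disjoint_left.1 hdis (C.attrs_child_subset hc₁ hx)
        (C.attrs_child_subset hc₂ hx)
end

section
/- Let X be a finite attribute set, D a finite domain, Z ⊆ X, R ⊆ D^X nonempty and finite, and ω' : ∃Z.R → ℝ₊. Define ω : R → ℝ₊ by ω(τ) := ω'(τ|_{X\Z}) / |Ext(τ|_{X\Z})|. Then for every x ∈ X \ Z and d ∈ D, Σ_{τ ∈ R, τ(x)=d} ω(τ) = Σ_{τ' ∈ ∃Z.R, τ'(x)=d} ω'(τ'). -/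
open Finset

/-- The projection of a tuple `τ : X → D` onto the attributes outside `Z`. -/
def projTup {X D : Type} [Fintype X] [DecidableEq X] (Z : Finset X) (τ : X → D) :
    {x : X // x ∈ Zᶜ} → D :=
  fun y => τ y.1

/-- Pulling a tuple-weighting `ω'` of `∃Z.R` back to `R` by splitting the weight of
each projected tuple evenly among its extensions: defining
`ω(τ) := ω'(τ|_{X∖Z}) / |Ext(τ|_{X∖Z})|`, the CAS sums are preserved: for every
attribute `x ∉ Z` and `d ∈ D`,
`Σ_{τ ∈ R, τ(x)=d} ω(τ) = Σ_{τ' ∈ ∃Z.R, τ'(x)=d} ω'(τ')`. -/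
theorem lift_weighting_preserves_sums {X D : Type} [Fintype X] [Fintype D]
    [DecidableEq X] [DecidableEq D]
    (Z : Finset X) (R : Finset (X → D)) (hR : R.Nonempty)
    (ω' : ({x : X // x ∈ Zᶜ} → D) → ℝ)
    (hω' : ∀ τ' ∈ R.image (projTup Z), 0 ≤ ω' τ')
    (ω : (X → D) → ℝ)
    (hω : ∀ τ, ω τ = ω' (projTup Z τ)
      / (R.filter (fun σ => projTup Z σ = projTup Z τ)).card) :
    ∀ (x : {x : X // x ∈ Zᶜ}) (d : D),
      (∑ τ ∈ R.filter (fun τ => τ x.1 = d), ω τ)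
        = ∑ τ' ∈ (R.image (projTup Z)).filter (fun τ' => τ' x = d), ω' τ' := by
  intro x d
  have himg : (R.image (projTup Z)).filter (fun τ' => τ' x = d)
      = (R.filter (fun τ => τ x.1 = d)).image (projTup Z) := by
    ext t
    simp only [mem_filter, mem_image]
    constructor
    · rintro ⟨⟨τ, hτ, rfl⟩, h⟩
      exact ⟨τ, ⟨hτ, h⟩, rfl⟩
    · rintro ⟨τ, ⟨hτ, h⟩, rfl⟩
      exact ⟨⟨τ, hτ, rfl⟩, h⟩
  rw [himg]
  refine (Finset.sum_image' ω ?_).symm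
  intro c hc
  have hc' := Finset.mem_filter.mp hc
  have hfib : ((R.filter (fun τ => τ x.1 = d)).filter
      (fun c' => projTup Z c' = projTup Z c))
      = R.filter (fun σ => projTup Z σ = projTup Z c) := by
    ext σ
    simp only [mem_filter, and_assoc]
    constructor
    · rintro ⟨h1, _, h3⟩; exact ⟨h1, h3⟩
    · rintro ⟨h1, h3⟩
      refine ⟨h1, ?_, h3⟩
      have : projTup Z σ x = projTup Z c x := by rw [h3]
      simpa [projTup, hc'.2] using this
  rw [hfib]
  have hcard : (R.filter (fun σ => projTup Z σ = projTup Z c)).card ≠ 0 := by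
    refine Finset.card_ne_zero_of_mem (Finset.mem_filter.mpr ⟨hc'.1, rfl⟩)
  calc ω' (projTup Z c)
      = (R.filter (fun σ => projTup Z σ = projTup Z c)).card
        * (ω' (projTup Z c)
          / (R.filter (fun σ => projTup Z σ = projTup Z c)).card) := by
        field_simp
    _ = ∑ σ ∈ R.filter (fun σ => projTup Z σ = projTup Z c), ω σ := by
        rw [Finset.sum_congr rfl (fun σ hσ => ?_), Finset.sum_const,
          nsmul_eq_mul]
        rw [hω σ, (Finset.mem_filter.mp hσ).2]
end
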